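/- Let p be a prime and let G be an infinite group in which every subgroup other than the trivial subgroup and G itself is cyclic of order p. Suppose G acts by homeomorphisms on a compact Hausdorff space X with more than one point, and the action is minimal (every orbit is dense). Then for every s ∈ G with s ≠ e, the interior of the fixed-point set {x ∈ X : s·x = x} is a finite set. -/

import Mathlib

open Subgroup Pointwise

/-- An element of infinite order is not a power of its square. -/
private lemma aux_not_mem_zpowers_sq {H : Type*} [Group H] {c : H}
    (hc : orderOf c = 0) : c ∉ zpowers (c ^ 2) := by
  rintro ⟨k, hk⟩
  have hk2 : (c ^ (2 : ℕ)) ^ k = c := hk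
  have h1 : c ^ ((2 : ℤ) * k) = c := by
    rw [← zpow_natCast c 2, ← zpow_mul] at hk2
    exact_mod_cast hk2
  have h2 : c ^ ((2 : ℤ) * k - 1) = 1 := by
    rw [zpow_sub, h1, zpow_one, mul_inv_cancel]
  have h3 : ((orderOf c : ℤ)) ∣ (2 * k - 1) := orderOf_dvd_iff_zpow_eq_one.mpr h2
  rw [hc] at h3
  omega

theorem stmt_12 {G X : Type*} [Group G] [Infinite G]
    [TopologicalSpace X] [CompactSpace X] [T2Space X] [Nontrivial X]
    [MulAction G X] [ContinuousConstSMul G X]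
    (p : ℕ) (hp : p.Prime)
    (htarski : ∀ H : Subgroup G, H ≠ ⊥ → H ≠ ⊤ → IsCyclic H ∧ Nat.card H = p)
    (hmin : ∀ y : X, Dense (Set.range fun t : G => t • y)) :
    ∀ s : G, s ≠ 1 → (interior {x : X | s • x = x}).Finite := by
  have hcardG : Nat.card G = 0 := Nat.card_eq_zero_of_infinite
  -- Every nontrivial element has order p.
  have horder : ∀ a : G, a ≠ 1 → orderOf a = p := by
    intro a ha
    by_cases htop : zpowers a = ⊤
    · -- then a has infinite order, and zpowers (a^2) leads to contradiction
      exfalso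
      have h0 : orderOf a = 0 := by
        rw [← Nat.card_zpowers, htop, Subgroup.card_top, hcardG]
      have h02 : orderOf (a ^ 2) = 0 := by
        rw [orderOf_pow' a two_ne_zero, h0, Nat.zero_div]
      have ha2 : a ^ 2 ≠ 1 := by
        intro h; rw [h, orderOf_one] at h02; omega
      have hbot2 : zpowers (a ^ 2) ≠ ⊥ := zpowers_eq_bot.not.mpr ha2
      by_cases htop2 : zpowers (a ^ 2) = ⊤
      · exact aux_not_mem_zpowers_sq h0 (htop2 ▸ mem_top a)
      · have := (htarski _ hbot2 htop2).2
        rw [Nat.card_zpowers, h02] at this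
        exact hp.ne_zero this.symm
    · have hbot : zpowers a ≠ ⊥ := zpowers_eq_bot.not.mpr ha
      have := (htarski _ hbot htop).2
      rwa [Nat.card_zpowers] at this
  have hcard_zp : ∀ a : G, a ≠ 1 → Nat.card (zpowers a) = p := by
    intro a ha; rw [Nat.card_zpowers]; exact horder a ha
  have hfin_zp : ∀ a : G, a ≠ 1 → Finite (zpowers a) := by
    intro a ha
    exact Nat.finite_of_card_ne_zero (by rw [hcard_zp a ha]; exact hp.ne_zero)
  -- Any two "independent" nontrivial elements generate G.
  have hgen : ∀ a b : G, a ≠ 1 → b ∉ zpowers a → zpowers a ⊔ zpowers b = ⊤ := by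
    intro a b ha hb
    by_contra htop
    have hbot : zpowers a ⊔ zpowers b ≠ ⊥ := by
      intro h
      have : a ∈ (⊥ : Subgroup G) := h ▸ (le_sup_left (a := zpowers a) (mem_zpowers a))
      exact ha (mem_bot.mp this)
    have hc := (htarski _ hbot htop).2
    haveI : Finite (zpowers a ⊔ zpowers b : Subgroup G) :=
      Nat.finite_of_card_ne_zero (by rw [hc]; exact hp.ne_zero)
    have hle : zpowers a ≤ zpowers a ⊔ zpowers b := le_sup_left
    have heq : zpowers a = zpowers a ⊔ zpowers b :=
      eq_of_le_of_card_ge hle (by rw [hc, hcard_zp a ha])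
    have hbmem : b ∈ zpowers a ⊔ zpowers b := (le_sup_right : zpowers b ≤ _) (mem_zpowers b)
    rw [← heq] at hbmem
    exact hb hbmem
  -- No nontrivial proper normal subgroup.
  have hnonormal : ∀ N : Subgroup G, N.Normal → N ≠ ⊥ → N = ⊤ := by
    intro N hN hNbot
    by_contra hNtop
    have hcardN : Nat.card N = p := (htarski N hNbot hNtop).2
    haveI hfinN : Finite N := Nat.finite_of_card_ne_zero (by rw [hcardN]; exact hp.ne_zero)
    haveI : Infinite (G ⧸ N) := by
      rw [← not_finite_iff_infinite]
      intro h
      haveI := h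
      haveI : Finite G := Finite.of_equiv ((G ⧸ N) × N) (Subgroup.groupEquivQuotientProdSubgroup (s := N)).symm
      exact not_finite G
    -- every element outside N maps to a generator of G/N
    have key : ∀ u : G, u ∉ N → zpowers (QuotientGroup.mk (s := N) u) = ⊤ := by
      intro u hu
      set H : Subgroup G := (zpowers ((QuotientGroup.mk (s := N) u))).comap (QuotientGroup.mk' N)
      have hNH : N ≤ H := by
        intro n hn
        show QuotientGroup.mk n ∈ zpowers _
        have : (QuotientGroup.mk n : G ⧸ N) = 1 := (QuotientGroup.eq_one_iff n).mpr hn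
        rw [this]; exact one_mem _
      have huH : u ∈ H := mem_zpowers _
      have hHbot : H ≠ ⊥ := by
        intro h; exact hNbot (le_bot_iff.mp (h ▸ hNH))
      have hHtop : H = ⊤ := by
        by_contra h
        have hcH : Nat.card H = p := (htarski H hHbot h).2
        haveI : Finite H := Nat.finite_of_card_ne_zero (by rw [hcH]; exact hp.ne_zero)
        have : N = H := eq_of_le_of_card_ge hNH (by rw [hcH, hcardN])
        exact hu (this ▸ huH)
      have hsurj := QuotientGroup.mk'_surjective N
      calc zpowers (QuotientGroup.mk (s := N) u)
          = Subgroup.map (QuotientGroup.mk' N) H := by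
            rw [Subgroup.map_comap_eq_self_of_surjective hsurj]
        _ = ⊤ := by rw [hHtop, ← MonoidHom.range_eq_map, MonoidHom.range_eq_top_of_surjective _ hsurj]
    obtain ⟨t, ht⟩ := exists_ne (1 : G ⧸ N)
    obtain ⟨t, rfl⟩ := QuotientGroup.mk'_surjective N t
    have htN : t ∉ N := fun h => ht ((QuotientGroup.eq_one_iff t).mpr h)
    have horder0 : orderOf (QuotientGroup.mk (s := N) t) = 0 := by
      rw [← Nat.card_zpowers, key t htN, card_top, Nat.card_eq_zero_of_infinite]
    have h02 : orderOf ((QuotientGroup.mk (s := N) t) ^ 2) = 0 := by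
      rw [orderOf_pow' _ two_ne_zero, horder0, Nat.zero_div]
    have ht2 : t ^ 2 ∉ N := by
      intro h
      have : ((QuotientGroup.mk (s := N) t) ^ 2 : G ⧸ N) = 1 := by
        rw [← QuotientGroup.mk_pow]
        exact (QuotientGroup.eq_one_iff _).mpr h
      rw [this, orderOf_one] at h02; omega
    have := key (t ^ 2) ht2
    rw [QuotientGroup.mk_pow] at this
    exact aux_not_mem_zpowers_sq horder0 (this ▸ mem_top _)
  -- Now the topological argument.
  intro s hs
  set U : Set X := interior {x : X | s • x = x} with hU
  rcases U.eq_empty_or_nonempty with hUe | ⟨x₀, hx₀⟩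
  · rw [hUe]; exact Set.finite_empty
  exfalso
  have hUopen : IsOpen U := isOpen_interior
  have hUfix : ∀ x ∈ U, s • x = x := fun x hx =>
    (interior_subset (s := {y : X | s • y = y}) hx : x ∈ {y : X | s • y = y})
  -- no global fixed point
  have hT1 : ∀ x : X, ¬ (∀ g : G, g • x = x) := by
    intro x hx
    have hr : Set.range (fun t : G => t • x) = ({x} : Set X) := by
      ext y; simp only [Set.mem_range, Set.mem_singleton_iff]
      constructor
      · rintro ⟨t, rfl⟩; exact hx t
      · intro h; exact ⟨1, by rw [one_smul]; exact h.symm⟩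
    have hd := hmin x
    rw [hr] at hd
    obtain ⟨y, hy⟩ := exists_ne x
    have : y ∈ closure ({x} : Set X) := hd y
    rw [IsClosed.closure_eq isClosed_singleton] at this
    exact hy this
  -- normalizer of zpowers s equals zpowers s
  haveI hfs : Finite (zpowers s) := hfin_zp s hs
  have hnorm : normalizer (zpowers s : Set G) = zpowers s := by
    have hle : zpowers s ≤ normalizer (zpowers s : Set G) := le_normalizer
    have hntop : normalizer (zpowers s : Set G) ≠ ⊤ := by
      intro h
      have : zpowers s = ⊤ := hnonormal _ (normalizer_eq_top_iff.mp h) (zpowers_eq_bot.not.mpr hs)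
      have := hcard_zp s hs
      rw [‹zpowers s = ⊤›, Subgroup.card_top, hcardG] at this
      exact hp.ne_zero this.symm
    have hnbot : normalizer (zpowers s : Set G) ≠ ⊥ := by
      intro h
      exact (zpowers_eq_bot.not.mpr hs) (le_bot_iff.mp (h ▸ hle))
    have hcN : Nat.card (normalizer (zpowers s : Set G)) = p := (htarski _ hnbot hntop).2
    haveI : Finite (normalizer (zpowers s : Set G) : Subgroup G) :=
      Nat.finite_of_card_ne_zero (by rw [hcN]; exact hp.ne_zero)
    exact (eq_of_le_of_card_ge hle (by rw [hcN, hcard_zp s hs])).symm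
  -- key step: a conjugate of s fixing a point of U forces normalizer membership
  have hconj : ∀ k : G, ∀ x : X, x ∈ U → x ∈ k • U → k * s * k⁻¹ ∈ zpowers s := by
    intro k x hxU hxkU
    have hk : k⁻¹ • x ∈ U := Set.mem_smul_set_iff_inv_smul_mem.mp hxkU
    have hfix : (k * s * k⁻¹) • x = x := by
      have := hUfix _ hk
      calc (k * s * k⁻¹) • x = k • s • k⁻¹ • x := by rw [mul_smul, mul_smul]
        _ = k • (k⁻¹ • x) := by rw [this]
        _ = x := smul_inv_smul k x
    by_contra hb
    have htop := hgen s (k * s * k⁻¹) hs hb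
    apply hT1 x
    intro g
    have hg : g ∈ zpowers s ⊔ zpowers (k * s * k⁻¹) := htop ▸ mem_top g
    have hle : zpowers s ⊔ zpowers (k * s * k⁻¹) ≤ MulAction.stabilizer G x := by
      apply sup_le
      · rw [zpowers_le]; exact hUfix x hxU
      · rw [zpowers_le]; exact hfix
    exact hle hg
  have hkey : ∀ k : G, (∃ x, x ∈ k • U ∧ x ∈ U) → k ∈ zpowers s := by
    rintro k ⟨x, hxkU, hxU⟩
    have h1 : k * s * k⁻¹ ∈ zpowers s := hconj k x hxU hxkU
    have h2 : k⁻¹ * s * k ∈ zpowers s := by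
      have hx' : k⁻¹ • x ∈ U := Set.mem_smul_set_iff_inv_smul_mem.mp hxkU
      have hx'' : k⁻¹ • x ∈ k⁻¹ • U := Set.smul_mem_smul_set hxU
      have := hconj k⁻¹ (k⁻¹ • x) hx' hx''
      rwa [inv_inv] at this
    rw [← hnorm]
    rw [mem_normalizer_iff]
    intro h
    constructor
    · rintro ⟨m, rfl⟩
      have : k * s ^ m * k⁻¹ = (k * s * k⁻¹) ^ m := (conj_zpow).symm
      rw [this]
      exact zpow_mem h1 m
    · rintro hm
      obtain ⟨m, hm'⟩ := hm
      have hm'' : s ^ m = k * h * k⁻¹ := hm'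
      have h3 : (k⁻¹ * s * k⁻¹⁻¹) ^ m = k⁻¹ * s ^ m * k⁻¹⁻¹ := conj_zpow
      rw [inv_inv] at h3
      have : h = (k⁻¹ * s * k) ^ m := by
        rw [h3, hm'']
        group
      rw [this]
      exact zpow_mem h2 m
  -- minimality: translates of U cover X
  have hcover : (Set.univ : Set X) ⊆ ⋃ g : G, g • U := by
    intro y _
    have hd := hmin y
    obtain ⟨z, ⟨t, rfl⟩, hzU⟩ := hd.exists_mem_open hUopen ⟨x₀, hx₀⟩
    exact Set.mem_iUnion.mpr ⟨t⁻¹, Set.mem_smul_set_iff_inv_smul_mem.mpr (by rwa [inv_inv])⟩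
  obtain ⟨T, hT⟩ := isCompact_univ.elim_finite_subcover (fun g : G => g • U)
    (fun g => hUopen.smul g) hcover
  -- pick g' outside all cosets g • zpowers s, g ∈ T
  have hBfin : (⋃ g ∈ T, g • (zpowers s : Set G)).Finite := by
    apply Set.Finite.biUnion T.finite_toSet
    intro g _
    exact (Set.toFinite (zpowers s : Set G)).smul_set
  obtain ⟨g', hg'⟩ := hBfin.infinite_compl.nonempty
  have hx' : g' • x₀ ∈ ⋃ g ∈ T, g • U := hT (Set.mem_univ _)
  obtain ⟨g, hgT, hgx⟩ := Set.mem_iUnion₂.mp hx'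
  -- g'•x₀ ∈ g'U ∩ gU  ⇒  g⁻¹ g' ∈ zpowers s
  have hmem : (g⁻¹ * g') ∈ zpowers s := by
    apply hkey
    refine ⟨g⁻¹ • (g' • x₀), ?_, ?_⟩
    · rw [mul_smul]
      exact Set.smul_mem_smul_set (Set.smul_mem_smul_set hx₀)
    · exact Set.mem_smul_set_iff_inv_smul_mem.mp hgx
  apply hg'
  exact Set.mem_biUnion hgT (Set.mem_smul_set_iff_inv_smul_mem.mpr (by simpa using hmem))
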